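/- Let b_{11}, b_{12}, b_{21}, b_{22} be nonnegative reals with b_{11} + b_{22} > b_{12} + b_{21}, and for x > 1 let H(x) be the real 2×2 matrix with entries H(x)_{ij} = x^{b_{ij}/2}. Then lim_{x→∞} log det(I_2 + H(x) H(x)^T) / log x = b_{11} + b_{22}. -/

import Mathlib

open Matrix in
theorem stmt_5 (b11 b12 b21 b22 : ℝ)
    (h11 : 0 ≤ b11) (h12 : 0 ≤ b12) (h21 : 0 ≤ b21) (h22 : 0 ≤ b22)
    (hmax : b12 + b21 < b11 + b22) :
    Filter.Tendsto
      (fun x : ℝ =>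
        Real.log
          ((1 +
            (!![x ^ (b11 / 2), x ^ (b12 / 2); x ^ (b21 / 2), x ^ (b22 / 2)] :
              Matrix (Fin 2) (Fin 2) ℝ) *
            (!![x ^ (b11 / 2), x ^ (b12 / 2); x ^ (b21 / 2), x ^ (b22 / 2)] :
              Matrix (Fin 2) (Fin 2) ℝ)ᵀ).det) / Real.log x)
      Filter.atTop (nhds (b11 + b22)) := by
  set s : ℝ := b11 + b22 with hs
  set t : ℝ := b12 + b21 with ht
  have hdet : ∀ x : ℝ,
      ((1 +
            (!![x ^ (b11 / 2), x ^ (b12 / 2); x ^ (b21 / 2), x ^ (b22 / 2)] :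
              Matrix (Fin 2) (Fin 2) ℝ) *
            (!![x ^ (b11 / 2), x ^ (b12 / 2); x ^ (b21 / 2), x ^ (b22 / 2)] :
              Matrix (Fin 2) (Fin 2) ℝ)ᵀ).det)
      = 1 + (x ^ (b11/2))^2 + (x ^ (b12/2))^2 + (x ^ (b21/2))^2 + (x ^ (b22/2))^2
          + (x ^ (b11/2) * x ^ (b22/2) - x ^ (b12/2) * x ^ (b21/2))^2 := by
    intro x
    simp [Matrix.det_fin_two, Matrix.mul_apply, Fin.sum_univ_two, Matrix.one_apply,
      Matrix.transpose_apply, Matrix.cons_val_zero, Matrix.cons_val_one, Matrix.head_cons,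
      Matrix.head_fin_const, Matrix.vecHead, Matrix.vecTail, Matrix.vecMul, dotProduct,
      Matrix.of_apply]
    ring
  have hts : (t - s) / 2 < 0 := by linarith
  have hlogtop : Filter.Tendsto Real.log Filter.atTop Filter.atTop :=
    Real.tendsto_log_atTop
  -- the two bounding functions tend to s
  have hzero : ∀ c : ℝ, Filter.Tendsto (fun x : ℝ => c / Real.log x)
      Filter.atTop (nhds 0) := by
    intro c
    have := (hlogtop.inv_tendsto_atTop).const_mul c
    simpa [div_eq_mul_inv] using this
  have hlow : Filter.Tendsto (fun x : ℝ => s - Real.log 4 / Real.log x)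
      Filter.atTop (nhds s) := by
    have := (hzero (Real.log 4)).const_sub s
    simpa using this
  have hhigh : Filter.Tendsto (fun x : ℝ => s + Real.log 6 / Real.log x)
      Filter.atTop (nhds s) := by
    have := (hzero (Real.log 6)).const_add s
    simpa using this
  -- eventual smallness of x ^ ((t-s)/2)
  have hsmall : ∀ᶠ x : ℝ in Filter.atTop, x ^ ((t - s)/2) ≤ 1/2 := by
    have := (tendsto_rpow_neg_atTop (by linarith : (0:ℝ) < -((t - s)/2))).eventually_le_const
      (by norm_num : (0:ℝ) < 1/2)
    simpa [Real.rpow_neg] using this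
  refine tendsto_of_tendsto_of_tendsto_of_le_of_le' hlow hhigh ?_ ?_
  · -- lower bound
    filter_upwards [Filter.eventually_ge_atTop (2:ℝ), hsmall] with x hx2 hxs
    have hx1 : (1:ℝ) < x := by linarith
    have hx0 : (0:ℝ) < x := by linarith
    have hlogpos : 0 < Real.log x := Real.log_pos hx1
    rw [hdet x]
    -- F x ≥ x^s / 4
    have hst2 : x ^ (t/2) ≤ x ^ (s/2) / 2 := by
      have : x ^ (t/2) = x ^ (s/2) * x ^ ((t - s)/2) := by
        rw [← Real.rpow_add hx0]; ring_nf
      rw [this]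
      have hp : (0:ℝ) < x ^ (s/2) := Real.rpow_pos_of_pos hx0 _
      calc x ^ (s/2) * x ^ ((t - s)/2) ≤ x ^ (s/2) * (1/2) := by
            exact mul_le_mul_of_nonneg_left hxs hp.le
        _ = x ^ (s/2) / 2 := by ring
    have hpt : x ^ (b11/2) * x ^ (b22/2) = x ^ (s/2) := by
      rw [← Real.rpow_add hx0, hs]; ring_nf
    have hqr : x ^ (b12/2) * x ^ (b21/2) = x ^ (t/2) := by
      rw [← Real.rpow_add hx0, ht]; ring_nf
    have hxs2 : (x ^ (s/2))^2 = x ^ s := by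
      rw [← Real.rpow_natCast (x ^ (s/2)) 2, ← Real.rpow_mul hx0.le]; norm_num
    have hFlow : x ^ s / 4 ≤ 1 + (x ^ (b11/2))^2 + (x ^ (b12/2))^2 + (x ^ (b21/2))^2
        + (x ^ (b22/2))^2 + (x ^ (b11/2) * x ^ (b22/2) - x ^ (b12/2) * x ^ (b21/2))^2 := by
      rw [hpt, hqr]
      have h1 : (x ^ (s/2) / 2)^2 ≤ (x ^ (s/2) - x ^ (t/2))^2 := by
        have ht0 : (0:ℝ) ≤ x ^ (t/2) := (Real.rpow_pos_of_pos hx0 _).le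
        have hp : (0:ℝ) < x ^ (s/2) := Real.rpow_pos_of_pos hx0 _
        have : 0 ≤ x ^ (s/2) / 2 := by positivity
        nlinarith
      have h2 : (x ^ (s/2) / 2)^2 = x ^ s / 4 := by rw [div_pow, hxs2]; norm_num
      nlinarith [Real.rpow_pos_of_pos hx0 (b11/2), Real.rpow_pos_of_pos hx0 (b12/2),
        Real.rpow_pos_of_pos hx0 (b21/2), Real.rpow_pos_of_pos hx0 (b22/2), sq_nonneg (x ^ (b11/2)),
        sq_nonneg (x ^ (b12/2)), sq_nonneg (x ^ (b21/2)), sq_nonneg (x ^ (b22/2))]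
    have hx4pos : (0:ℝ) < x ^ s / 4 := by positivity
    have hloglog : Real.log (x ^ s / 4) ≤ Real.log (1 + (x ^ (b11/2))^2 + (x ^ (b12/2))^2
        + (x ^ (b21/2))^2 + (x ^ (b22/2))^2
        + (x ^ (b11/2) * x ^ (b22/2) - x ^ (b12/2) * x ^ (b21/2))^2) :=
      Real.log_le_log hx4pos hFlow
    have hcalc : Real.log (x ^ s / 4) = s * Real.log x - Real.log 4 := by
      rw [Real.log_div (by positivity) (by norm_num), Real.log_rpow hx0]
    calc s - Real.log 4 / Real.log x = Real.log (x ^ s / 4) / Real.log x := by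
          rw [hcalc]; field_simp
      _ ≤ _ := (div_le_div_iff_of_pos_right hlogpos).mpr hloglog
  · -- upper bound
    filter_upwards [Filter.eventually_ge_atTop (2:ℝ)] with x hx2
    have hx1 : (1:ℝ) < x := by linarith
    have hx0 : (0:ℝ) < x := by linarith
    have hlogpos : 0 < Real.log x := Real.log_pos hx1
    rw [hdet x]
    have hpt : x ^ (b11/2) * x ^ (b22/2) = x ^ (s/2) := by
      rw [← Real.rpow_add hx0, hs]; ring_nf
    have hqr : x ^ (b12/2) * x ^ (b21/2) = x ^ (t/2) := by
      rw [← Real.rpow_add hx0, ht]; ring_nf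
    have hxs2 : (x ^ (s/2))^2 = x ^ s := by
      rw [← Real.rpow_natCast (x ^ (s/2)) 2, ← Real.rpow_mul hx0.le]; norm_num
    have hb : ∀ b : ℝ, b ≤ s → (x ^ (b/2))^2 ≤ x ^ s := by
      intro b hb
      have : (x ^ (b/2))^2 = x ^ b := by
        rw [← Real.rpow_natCast (x ^ (b/2)) 2, ← Real.rpow_mul hx0.le]; norm_num
      rw [this]
      exact Real.rpow_le_rpow_of_exponent_le hx1.le hb
    have h11' := hb b11 (by simp only [hs]; linarith)
    have h12' := hb b12 (by simp only [hs, ht] at *; linarith)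
    have h21' := hb b21 (by simp only [hs, ht] at *; linarith)
    have h22' := hb b22 (by simp only [hs]; linarith)
    have hone : (1:ℝ) ≤ x ^ s := Real.one_le_rpow hx1.le (by simp only [hs]; linarith)
    have hsq : (x ^ (b11/2) * x ^ (b22/2) - x ^ (b12/2) * x ^ (b21/2))^2 ≤ x ^ s := by
      rw [hpt, hqr, ← hxs2]
      have ht0 : (0:ℝ) ≤ x ^ (t/2) := (Real.rpow_pos_of_pos hx0 _).le
      have hts' : x ^ (t/2) ≤ x ^ (s/2) :=
        Real.rpow_le_rpow_of_exponent_le hx1.le (by linarith)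
      have hs0 : (0:ℝ) ≤ x ^ (s/2) := (Real.rpow_pos_of_pos hx0 _).le
      exact sq_le_sq' (by linarith) (by linarith)
    have hF0 : 0 < 1 + (x ^ (b11/2))^2 + (x ^ (b12/2))^2 + (x ^ (b21/2))^2 + (x ^ (b22/2))^2
        + (x ^ (b11/2) * x ^ (b22/2) - x ^ (b12/2) * x ^ (b21/2))^2 := by positivity
    have hFup : 1 + (x ^ (b11/2))^2 + (x ^ (b12/2))^2 + (x ^ (b21/2))^2 + (x ^ (b22/2))^2
        + (x ^ (b11/2) * x ^ (b22/2) - x ^ (b12/2) * x ^ (b21/2))^2 ≤ 6 * x ^ s := by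
      linarith
    have hloglog := Real.log_le_log hF0 hFup
    have hcalc : Real.log (6 * x ^ s) = Real.log 6 + s * Real.log x := by
      rw [Real.log_mul (by norm_num) (by positivity), Real.log_rpow hx0]
    calc Real.log (1 + (x ^ (b11/2))^2 + (x ^ (b12/2))^2 + (x ^ (b21/2))^2 + (x ^ (b22/2))^2
          + (x ^ (b11/2) * x ^ (b22/2) - x ^ (b12/2) * x ^ (b21/2))^2) / Real.log x
        ≤ Real.log (6 * x ^ s) / Real.log x := (div_le_div_iff_of_pos_right hlogpos).mpr hloglog
      _ = s + Real.log 6 / Real.log x := by rw [hcalc]; field_simp; ring
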